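/- Let r ≥ 1 and let α, α', β, β', γ, γ' : Fin (r+1) → ℕ be exit-density sequences with common weights ω = Σ_ℓ α_ℓ = Σ_ℓ β_ℓ = Σ_ℓ γ_ℓ and ω' = Σ_ℓ α'_ℓ = Σ_ℓ β'_ℓ = Σ_ℓ γ'_ℓ, and suppose Σ_{ℓ=0}^{r} ℓ(α'_ℓ + β'_ℓ + γ'_ℓ) = rω'. Define i_ℓ = ℓ + Σ_{j<ℓ} α_j, j_ℓ = ℓ + Σ_{j<ℓ} β_j, k_ℓ = ℓ + Σ_{j<ℓ} γ_j for 1 ≤ ℓ ≤ r, and n = r + ω. Then Σ_{ℓ=1}^{r} (α'_ℓ i_ℓ + β'_ℓ j_ℓ + γ'_ℓ k_ℓ) − ω' n = Σ_{ℓ<ℓ'} (α_ℓ α'_{ℓ'} + β_ℓ β'_{ℓ'} + γ_ℓ γ'_{ℓ'}) − ω ω'. -/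

import Mathlib

open Finset

lemma key_aux (r : ℕ) (a a' : ℕ → ℤ) :
    ∑ ℓ ∈ Finset.Icc 1 r, a' ℓ * ((ℓ : ℤ) + ∑ j ∈ range ℓ, a j)
    = ∑ ℓ ∈ range (r+1), (ℓ : ℤ) * a' ℓ
      + ∑ ℓ' ∈ range (r+1), ∑ ℓ ∈ range ℓ', a ℓ * a' ℓ' := by
  have h : Finset.Icc 1 r = (range (r+1)).erase 0 := by
    ext x
    simp [Nat.lt_succ_iff, Nat.one_le_iff_ne_zero, and_comm]
  rw [h, Finset.sum_erase _ (by simp)]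
  rw [← Finset.sum_add_distrib]
  apply Finset.sum_congr rfl
  intro ℓ _
  rw [← Finset.sum_mul]
  ring

/-- Formula (2.3) of the paper: rewriting `Σ_{m'}(m)` in terms of exit densities only. -/
theorem stmt3 (r ω ω' : ℕ) (hr : 1 ≤ r) (α β γ α' β' γ' : ℕ → ℕ)
    (hα : ∑ ℓ ∈ range (r+1), α ℓ = ω)
    (hβ : ∑ ℓ ∈ range (r+1), β ℓ = ω)
    (hγ : ∑ ℓ ∈ range (r+1), γ ℓ = ω)
    (hα' : ∑ ℓ ∈ range (r+1), α' ℓ = ω')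
    (hβ' : ∑ ℓ ∈ range (r+1), β' ℓ = ω')
    (hγ' : ∑ ℓ ∈ range (r+1), γ' ℓ = ω')
    (htrace : ∑ ℓ ∈ range (r+1), ℓ * (α' ℓ + β' ℓ + γ' ℓ) = r * ω') :
    (∑ ℓ ∈ Finset.Icc 1 r,
        ((α' ℓ : ℤ) * ((ℓ : ℤ) + ∑ j ∈ range ℓ, (α j : ℤ))
       + (β' ℓ : ℤ) * ((ℓ : ℤ) + ∑ j ∈ range ℓ, (β j : ℤ))
       + (γ' ℓ : ℤ) * ((ℓ : ℤ) + ∑ j ∈ range ℓ, (γ j : ℤ))))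
      - (ω' : ℤ) * ((r : ℤ) + ω)
    = (∑ ℓ' ∈ range (r+1), ∑ ℓ ∈ range ℓ',
        ((α ℓ : ℤ) * (α' ℓ' : ℤ) + (β ℓ : ℤ) * (β' ℓ' : ℤ) + (γ ℓ : ℤ) * (γ' ℓ' : ℤ)))
      - (ω : ℤ) * (ω' : ℤ) := by
  have hA := key_aux r (fun j => (α j : ℤ)) (fun j => (α' j : ℤ))
  have hB := key_aux r (fun j => (β j : ℤ)) (fun j => (β' j : ℤ))
  have hC := key_aux r (fun j => (γ j : ℤ)) (fun j => (γ' j : ℤ))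
  rw [Finset.sum_add_distrib, Finset.sum_add_distrib, hA, hB, hC]
  have ht : (∑ ℓ ∈ range (r+1), (ℓ : ℤ) * (α' ℓ : ℤ))
      + (∑ ℓ ∈ range (r+1), (ℓ : ℤ) * (β' ℓ : ℤ))
      + (∑ ℓ ∈ range (r+1), (ℓ : ℤ) * (γ' ℓ : ℤ)) = (r : ℤ) * ω' := by
    have := congrArg (fun n : ℕ => (n : ℤ)) htrace
    push_cast at this
    rw [← this]
    rw [← Finset.sum_add_distrib, ← Finset.sum_add_distrib]
    apply Finset.sum_congr rfl
    intro ℓ _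
    ring
  have hsplit : ∀ ℓ' ∈ range (r+1),
      ∑ ℓ ∈ range ℓ', ((α ℓ : ℤ) * (α' ℓ' : ℤ) + (β ℓ : ℤ) * (β' ℓ' : ℤ) + (γ ℓ : ℤ) * (γ' ℓ' : ℤ))
      = (∑ ℓ ∈ range ℓ', (α ℓ : ℤ) * (α' ℓ' : ℤ)) + (∑ ℓ ∈ range ℓ', (β ℓ : ℤ) * (β' ℓ' : ℤ))
        + (∑ ℓ ∈ range ℓ', (γ ℓ : ℤ) * (γ' ℓ' : ℤ)) := by
    intro ℓ' _
    rw [Finset.sum_add_distrib, Finset.sum_add_distrib]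
  rw [Finset.sum_congr rfl hsplit, Finset.sum_add_distrib, Finset.sum_add_distrib]
  linear_combination ht
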